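/- arXiv:1209.3523 — 2 statements merged into one kernel-verified Lean document; each statement's English description precedes it below -/
import Mathlib

section
/- Let F be a spanning tree of G of minimum c-length and let J be a (T_F △ T)-join of minimum c-length. Then the multiset F + J (summing multiplicities) is a T-tour of G and c(F) + c(J) ≤ (5/3)·opt(G,T,c). In particular the Christofides-type algorithm is a 5/3-approximation for the T-tour problem. -/
open scoped Classical
open Finset

noncomputable section

variable {V : Type*} [Fintype V] [DecidableEq V]

/-- The edge set of a graph as a `Finset` of `Sym2 V`. -/
def edgesOf (G : SimpleGraph V) : Finset (Sym2 V) :=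
  Finset.univ.filter (fun e => e ∈ G.edgeSet)

/-- Degree of a vertex in a set of edges. -/
def degOn (J : Finset (Sym2 V)) (v : V) : ℕ :=
  (J.filter (fun e => v ∈ e)).card

/-- The set of vertices of odd degree in a set of edges. -/
def oddVerts (J : Finset (Sym2 V)) : Finset V :=
  Finset.univ.filter (fun v => Odd (degOn J v))

/-- `J` is a `T`-join of `G`: a set of edges of `G` whose odd-degree vertex set is `T`. -/
def IsTJoin (G : SimpleGraph V) (T : Finset V) (J : Finset (Sym2 V)) : Prop :=
  J ⊆ edgesOf G ∧ oddVerts J = T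

/-- `F` is a spanning tree of `G`: edges of `G`, connected, with `|V| - 1` edges. -/
def IsSpanningTree (G : SimpleGraph V) (F : Finset (Sym2 V)) : Prop :=
  F ⊆ edgesOf G ∧ (SimpleGraph.fromEdgeSet (F : Set (Sym2 V))).Connected ∧
    F.card + 1 = Fintype.card V

/-- δ(W): the set of edges of `G` with exactly one endpoint in `W`. -/
def cutEdges (G : SimpleGraph V) (W : Finset V) : Finset (Sym2 V) :=
  (edgesOf G).filter (fun e => ∃ u v, e = s(u, v) ∧ u ∈ W ∧ v ∉ W)

/-- `𝒲` is a partition of the vertex set `V`. -/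
def IsPartitionOf (𝒲 : Finset (Finset V)) : Prop :=
  (∀ W ∈ 𝒲, W.Nonempty) ∧
  (∀ W₁ ∈ 𝒲, ∀ W₂ ∈ 𝒲, W₁ ≠ W₂ → Disjoint W₁ W₂) ∧
  (∀ v : V, ∃ W ∈ 𝒲, v ∈ W)

/-- δ(𝒲): the set of edges of `G` whose endpoints lie in different classes of `𝒲`. -/
def partitionCut (G : SimpleGraph V) (𝒲 : Finset (Finset V)) : Finset (Sym2 V) :=
  (edgesOf G).filter (fun e => ¬ ∃ W ∈ 𝒲, ∀ v ∈ e, v ∈ W)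

/-- `x(A) = Σ_{e ∈ A} x(e)`. -/
def xval (x : Sym2 V → ℝ) (A : Finset (Sym2 V)) : ℝ := ∑ e ∈ A, x e

/-- `cᵀx`, summed over the edges of `G`. -/
def dotE (G : SimpleGraph V) (c x : Sym2 V → ℝ) : ℝ := ∑ e ∈ edgesOf G, c e * x e

/-- Membership in the polyhedron `P(G,T)`. -/
def memP (G : SimpleGraph V) (T : Finset V) (x : Sym2 V → ℝ) : Prop :=
  (∀ W : Finset V, W.Nonempty → W ≠ Finset.univ → Even ((W ∩ T).card) →
      2 ≤ xval x (cutEdges G W)) ∧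
  (∀ 𝒲 : Finset (Finset V), IsPartitionOf 𝒲 →
      (𝒲.card : ℝ) - 1 ≤ xval x (partitionCut G 𝒲)) ∧
  (∀ e ∈ edgesOf G, 0 ≤ x e ∧ x e ≤ 2)

/-- `m` (an edge multiplicity vector, values in `{0,1,2}`) is a `T`-tour of `G`:
its support consists of edges of `G`, the support spans a connected graph on `V`,
and the vertices of odd degree (with multiplicities) are exactly `T`. -/
def IsTTour (G : SimpleGraph V) (T : Finset V) (m : Sym2 V → ℕ) : Prop :=
  (∀ e, 0 < m e → e ∈ G.edgeSet) ∧ (∀ e, m e ≤ 2) ∧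
  (SimpleGraph.fromEdgeSet {e | 0 < m e}).Connected ∧
  (∀ v : V, (Odd (∑ e ∈ edgesOf G, if v ∈ e then m e else 0) ↔ v ∈ T))

/-- The `c`-length of a multiset of edges given by multiplicities `m`. -/
def tourCost (G : SimpleGraph V) (c : Sym2 V → ℝ) (m : Sym2 V → ℕ) : ℝ :=
  ∑ e ∈ edgesOf G, (m e : ℝ) * c e

/-- `opt(G,T,c)`: the minimum `c`-length of a `T`-tour. -/
def optLen (G : SimpleGraph V) (T : Finset V) (c : Sym2 V → ℝ) : ℝ :=
  sInf {L : ℝ | ∃ m, IsTTour G T m ∧ L = tourCost G c m}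

/-- The `c`-length of a set of edges. -/
def setCost (c : Sym2 V → ℝ) (J : Finset (Sym2 V)) : ℝ := ∑ e ∈ J, c e

/-- `τ(G,T',c)`: the minimum `c`-length of a `T'`-join. -/
def tau (G : SimpleGraph V) (T' : Finset V) (c : Sym2 V → ℝ) : ℝ :=
  sInf {L : ℝ | ∃ J, IsTJoin G T' J ∧ L = setCost c J}

/-- Membership in `Q₊(G,T')`: nonnegative and at least `1` on every `T'`-cut. -/
def memQplus (G : SimpleGraph V) (T' : Finset V) (x : Sym2 V → ℝ) : Prop :=
  (∀ e ∈ edgesOf G, 0 ≤ x e) ∧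
  (∀ W : Finset V, W.Nonempty → W ≠ Finset.univ → Odd ((W ∩ T').card) →
      1 ≤ xval x (cutEdges G W))

/-- Symmetric difference of two finite sets. -/
def symDiff (A B : Finset V) : Finset V := (A \ B) ∪ (B \ A)

/-- `p*(e) = Σ_{F ∈ 𝓕, e ∈ F(T)} λ_F`, where `JT F` plays the role of `F(T)`. -/
def pstar (𝓕 : Finset (Finset (Sym2 V))) (lam : Finset (Sym2 V) → ℝ)
    (JT : Finset (Sym2 V) → Finset (Sym2 V)) (e : Sym2 V) : ℝ :=
  ∑ F ∈ 𝓕.filter (fun F => e ∈ JT F), lam F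

/-- `q*(e) = Σ_{F ∈ 𝓕, e ∈ F ∖ F(T)} λ_F`. -/
def qstar (𝓕 : Finset (Finset (Sym2 V))) (lam : Finset (Sym2 V) → ℝ)
    (JT : Finset (Sym2 V) → Finset (Sym2 V)) (e : Sym2 V) : ℝ :=
  ∑ F ∈ 𝓕.filter (fun F => e ∈ F \ JT F), lam F

/-- `𝒬`: the family of cuts `Q` of `G` (as edge sets) with `x*(Q) < 2`. -/
def Qset (G : SimpleGraph V) (xstar : Sym2 V → ℝ) : Finset (Finset (Sym2 V)) :=
  Finset.univ.filter (fun C : Finset (Sym2 V) =>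
    (∃ W : Finset V, W.Nonempty ∧ W ≠ Finset.univ ∧ C = cutEdges G W) ∧ xval xstar C < 2)

/-- `x^Q(e) = Σ_{F ∈ 𝓕, Q ∩ F = {e}} λ_F`. -/
def xQ (𝓕 : Finset (Finset (Sym2 V))) (lam : Finset (Sym2 V) → ℝ)
    (C : Finset (Sym2 V)) (e : Sym2 V) : ℝ :=
  ∑ F ∈ 𝓕.filter (fun F => C ∩ F = {e}), lam F

/-- `f^Q(β) = max {0, (4β - 1 - β x*(Q)) / (2 - x*(Q))}`. -/
def fQ (xstar : Sym2 V → ℝ) (β : ℝ) (C : Finset (Sym2 V)) : ℝ :=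
  max 0 ((4 * β - 1 - β * xval xstar C) / (2 - xval xstar C))

/-- `s^F(β) = Σ_{Q ∈ 𝒬, |Q ∩ F| ≥ 2} f^Q(β) x^Q`. -/
def sF (G : SimpleGraph V) (xstar : Sym2 V → ℝ) (𝓕 : Finset (Finset (Sym2 V)))
    (lam : Finset (Sym2 V) → ℝ) (β : ℝ) (F : Finset (Sym2 V)) (e : Sym2 V) : ℝ :=
  ∑ C ∈ (Qset G xstar).filter (fun C => 2 ≤ (C ∩ F).card), fQ xstar β C * xQ 𝓕 lam C e

end
section Aux
set_option linter.unusedSectionVars false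
set_option maxHeartbeats 1000000
open SimpleGraph

variable {V : Type*} [Fintype V] [DecidableEq V]

lemma mem_edgesOf {G : SimpleGraph V} {e : Sym2 V} : e ∈ edgesOf G ↔ e ∈ G.edgeSet := by
  simp [edgesOf]

lemma not_isDiag_of_mem_edgesOf {G : SimpleGraph V} {e : Sym2 V} (h : e ∈ edgesOf G) :
    ¬ e.IsDiag :=
  G.not_isDiag_of_mem_edgeSet (mem_edgesOf.1 h)

lemma mem_symDiff {α : Type*} [DecidableEq α] {A B : Finset α} {v : α} :
    v ∈ symDiff A B ↔ (v ∈ A ∧ v ∉ B) ∨ (v ∈ B ∧ v ∉ A) := by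
  simp [symDiff]

lemma mem_oddVerts {J : Finset (Sym2 V)} {v : V} :
    v ∈ oddVerts J ↔ Odd (degOn J v) := by
  simp [oddVerts]

lemma filter_symDiff {α : Type*} [DecidableEq α] (A B : Finset α) (p : α → Prop)
    [DecidablePred p] :
    (symDiff A B).filter p = symDiff (A.filter p) (B.filter p) := by
  ext e
  simp only [symDiff, Finset.mem_filter, Finset.mem_union, Finset.mem_sdiff]
  tauto

lemma card_symDiff {α : Type*} [DecidableEq α] (A B : Finset α) :
    (symDiff A B).card + 2 * (A ∩ B).card = A.card + B.card := by
  have hdisj : Disjoint (A \ B) (B \ A) := by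
    refine Finset.disjoint_left.2 ?_
    intro a ha hb
    simp only [Finset.mem_sdiff] at ha hb
    exact hb.2 ha.1
  have h1 : (symDiff A B).card = (A \ B).card + (B \ A).card := by
    rw [symDiff, Finset.card_union_of_disjoint hdisj]
  have h2 : (A ∩ B).card + (A \ B).card = A.card := Finset.card_inter_add_card_sdiff A B
  have h3 : (B ∩ A).card + (B \ A).card = B.card := Finset.card_inter_add_card_sdiff B A
  rw [Finset.inter_comm] at h3
  omega

lemma degOn_symDiff_mod (A B : Finset (Sym2 V)) (v : V) :
    degOn (symDiff A B) v % 2 = (degOn A v + degOn B v) % 2 := by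
  unfold degOn
  rw [filter_symDiff]
  have := card_symDiff (A.filter (fun e => v ∈ e)) (B.filter (fun e => v ∈ e))
  omega

lemma oddVerts_symDiff (A B : Finset (Sym2 V)) :
    oddVerts (symDiff A B) = symDiff (oddVerts A) (oddVerts B) := by
  ext v
  have h := degOn_symDiff_mod A B v
  rw [mem_oddVerts, mem_symDiff, mem_oddVerts, mem_oddVerts, Nat.odd_iff, Nat.odd_iff,
    Nat.odd_iff]
  omega

lemma oddVerts_empty : oddVerts (∅ : Finset (Sym2 V)) = ∅ := by
  ext v
  simp [oddVerts, degOn]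

lemma degOn_singleton (e : Sym2 V) (v : V) :
    degOn {e} v = if v ∈ e then 1 else 0 := by
  unfold degOn
  rw [Finset.filter_singleton]
  split <;> simp

lemma oddVerts_single {a b : V} (hab : a ≠ b) :
    oddVerts ({s(a, b)} : Finset (Sym2 V)) = {a, b} := by
  ext v
  rw [mem_oddVerts, degOn_singleton]
  by_cases hv : v ∈ s(a, b) <;> simp_all [Sym2.mem_iff]

end Aux
section Aux2
set_option linter.unusedSectionVars false
set_option maxHeartbeats 1000000
open SimpleGraph

variable {V : Type*} [Fintype V] [DecidableEq V]

lemma card_mem_filter_eq_two {e : Sym2 V} (he : ¬ e.IsDiag) :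
    (Finset.univ.filter (fun v => v ∈ e)).card = 2 := by
  induction e with
  | _ a b =>
    rw [Sym2.mk_isDiag_iff] at he
    have : Finset.univ.filter (fun v => v ∈ s(a, b)) = {a, b} := by
      ext v; simp [Sym2.mem_iff]
    rw [this, Finset.card_pair he]

lemma sum_degOn (J : Finset (Sym2 V)) (hJ : ∀ e ∈ J, ¬ e.IsDiag) :
    ∑ v, degOn J v = 2 * J.card := by
  unfold degOn
  have h1 : ∀ v, (J.filter (fun e => v ∈ e)).card = ∑ e ∈ J, if v ∈ e then 1 else 0 := by
    intro v; rw [Finset.card_filter]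
  simp_rw [h1]
  rw [Finset.sum_comm]
  have h2 : ∀ e ∈ J, (∑ v : V, if v ∈ e then 1 else 0) = 2 := by
    intro e he
    rw [← Finset.card_filter]
    exact card_mem_filter_eq_two (hJ e he)
  rw [Finset.sum_congr rfl h2, Finset.sum_const, smul_eq_mul, mul_comm]

lemma even_card_oddVerts (J : Finset (Sym2 V)) (hJ : ∀ e ∈ J, ¬ e.IsDiag) :
    Even (oddVerts J).card := by
  have h0 : (oddVerts J).card = ∑ v : V, if Odd (degOn J v) then 1 else 0 := by
    unfold oddVerts; rw [Finset.card_filter]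
  have h1 : (∑ v : V, if Odd (degOn J v) then 1 else 0) % 2
      = (∑ v : V, degOn J v) % 2 := by
    rw [Finset.sum_nat_mod, Finset.sum_nat_mod (f := fun v => degOn J v)]
    congr 1
    apply Finset.sum_congr rfl
    intro v _
    rcases Nat.even_or_odd (degOn J v) with hv | hv
    · simp [Nat.not_odd_iff_even.2 hv, Nat.even_iff.1 hv]
    · simp [hv, Nat.odd_iff.1 hv]
  rw [Nat.even_iff, h0, h1, sum_degOn J hJ]
  omega

end Aux2
section Aux3
set_option linter.unusedSectionVars false
set_option maxHeartbeats 1000000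
open SimpleGraph

variable {V : Type*} [Fintype V] [DecidableEq V]

lemma exists_join_pair {E0 : Finset (Sym2 V)} {u v : V}
    (w : (SimpleGraph.fromEdgeSet (E0 : Set (Sym2 V))).Walk u v) :
    ∃ P, P ⊆ E0 ∧ oddVerts P = symDiff {u} {v} := by
  induction w with
  | nil =>
    refine ⟨∅, Finset.empty_subset _, ?_⟩
    rw [oddVerts_empty]
    ext x; simp [mem_symDiff]
  | @cons a b c h q ih =>
    obtain ⟨P', hsub, hodd⟩ := ih
    rw [SimpleGraph.fromEdgeSet_adj] at h
    refine ⟨symDiff {s(a, b)} P', ?_, ?_⟩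
    · intro e he
      rw [mem_symDiff] at he
      rcases he with ⟨he, -⟩ | ⟨he, -⟩
      · rw [Finset.mem_singleton] at he
        subst he
        exact_mod_cast h.1
      · exact hsub he
    · rw [oddVerts_symDiff, oddVerts_single h.2, hodd]
      ext x
      simp only [mem_symDiff, Finset.mem_singleton, Finset.mem_insert]
      by_cases hxa : x = a <;> by_cases hxb : x = b <;> by_cases hxc : x = c <;>
        simp_all <;> tauto

lemma exists_join {E0 : Finset (Sym2 V)}
    (hconn : (SimpleGraph.fromEdgeSet (E0 : Set (Sym2 V))).Connected)
    (X : Finset V) (hX : Even X.card) :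
    ∃ P, P ⊆ E0 ∧ oddVerts P = X := by
  induction X using Finset.strongInduction with
  | _ X ih =>
    by_cases hXe : X = ∅
    · subst hXe
      exact ⟨∅, Finset.empty_subset _, oddVerts_empty⟩
    · obtain ⟨u, hu⟩ := Finset.nonempty_iff_ne_empty.2 hXe
      have h2 : 2 ≤ X.card := by
        rcases hX with ⟨k, hk⟩
        have : 0 < X.card := Finset.card_pos.2 ⟨u, hu⟩
        omega
      have hune : (X.erase u).Nonempty := by
        rw [← Finset.card_pos, Finset.card_erase_of_mem hu]
        omega
      obtain ⟨v, hv⟩ := hune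
      have hvu : v ≠ u := Finset.ne_of_mem_erase hv
      have hvX : v ∈ X := Finset.mem_of_mem_erase hv
      set X' := (X.erase u).erase v with hX'
      have hssub : X' ⊂ X := by
        refine Finset.ssubset_iff_of_subset ?_ |>.2 ⟨u, hu, ?_⟩
        · intro x hx
          exact Finset.mem_of_mem_erase (Finset.mem_of_mem_erase hx)
        · simp [hX']
      have hcard : X'.card = X.card - 2 := by
        rw [hX', Finset.card_erase_of_mem hv, Finset.card_erase_of_mem hu]
        omega
      have hX'even : Even X'.card := by
        rw [Nat.even_iff] at hX ⊢
        omega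
      obtain ⟨P1, hP1sub, hP1odd⟩ := ih X' hssub hX'even
      obtain ⟨wlk⟩ := hconn.preconnected u v
      obtain ⟨P2, hP2sub, hP2odd⟩ := exists_join_pair wlk
      refine ⟨symDiff P1 P2, ?_, ?_⟩
      · intro e he
        rw [mem_symDiff] at he
        rcases he with ⟨he, -⟩ | ⟨he, -⟩
        · exact hP1sub he
        · exact hP2sub he
      · rw [oddVerts_symDiff, hP1odd, hP2odd]
        ext x
        simp only [mem_symDiff, Finset.mem_singleton, hX', Finset.mem_erase]
        by_cases hxu : x = u <;> by_cases hxv : x = v <;> simp_all <;> tauto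

end Aux3
section Aux4
set_option linter.unusedSectionVars false
set_option maxHeartbeats 1000000
open SimpleGraph

variable {V : Type*} [Fintype V] [DecidableEq V]

lemma fromEdgeSet_erase (E0 : Finset (Sym2 V)) (e : Sym2 V) :
    SimpleGraph.fromEdgeSet ((E0.erase e : Finset (Sym2 V)) : Set (Sym2 V)) =
      SimpleGraph.fromEdgeSet (E0 : Set (Sym2 V)) \ SimpleGraph.fromEdgeSet {e} := by
  ext u v
  simp only [SimpleGraph.fromEdgeSet_adj, SimpleGraph.sdiff_adj, Finset.coe_erase,
    Set.mem_diff, Set.mem_singleton_iff, Finset.mem_coe, Set.mem_setOf_eq]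
  constructor
  · rintro ⟨⟨he, hne⟩, huv⟩
    exact ⟨⟨he, huv⟩, fun h => hne h.1⟩
  · rintro ⟨⟨he, huv⟩, hn⟩
    exact ⟨⟨he, fun h => hn ⟨h, huv⟩⟩, huv⟩

lemma connected_delete {G0 : SimpleGraph V} (hconn : G0.Connected) {e : Sym2 V}
    (hnb : ¬ G0.IsBridge e) (he : e ∈ G0.edgeSet) :
    (G0 \ SimpleGraph.fromEdgeSet {e}).Connected := by
  have key : ∀ x y : V, G0.Adj x y → (G0 \ SimpleGraph.fromEdgeSet {e}).Reachable x y := by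
    intro x y hxy
    by_cases hxe : s(x, y) = e
    · subst hxe
      rw [SimpleGraph.isBridge_iff] at hnb
      push_neg at hnb
      exact hnb
    · refine SimpleGraph.Adj.reachable ?_
      rw [SimpleGraph.sdiff_adj]
      refine ⟨hxy, ?_⟩
      rw [SimpleGraph.fromEdgeSet_adj]
      rintro ⟨h1, -⟩
      exact hxe h1
  haveI : Nonempty V := hconn.nonempty
  refine SimpleGraph.Connected.mk ?_
  intro a b
  obtain ⟨w⟩ := hconn.preconnected a b
  induction w with
  | nil => exact SimpleGraph.Reachable.refl _
  | @cons p q r h wtail ih => exact (key p q h).trans ih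

lemma exists_spanning_tree (G : SimpleGraph V) (E0 : Finset (Sym2 V))
    (hsub : E0 ⊆ edgesOf G)
    (hconn : (SimpleGraph.fromEdgeSet (E0 : Set (Sym2 V))).Connected) :
    ∃ F', F' ⊆ E0 ∧ IsSpanningTree G F' := by
  induction E0 using Finset.strongInduction with
  | _ E0 ih =>
  by_cases hac : (SimpleGraph.fromEdgeSet (E0 : Set (Sym2 V))).IsAcyclic
  · refine ⟨E0, le_refl _, hsub, hconn, ?_⟩
    have htree : (SimpleGraph.fromEdgeSet (E0 : Set (Sym2 V))).IsTree := ⟨hconn, hac⟩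
    have hcard := htree.card_edgeFinset
    have hEF : (SimpleGraph.fromEdgeSet (E0 : Set (Sym2 V))).edgeFinset = E0 := by
      ext f
      rw [SimpleGraph.mem_edgeFinset, SimpleGraph.edgeSet_fromEdgeSet]
      simp only [Set.mem_diff, Finset.mem_coe, Set.mem_setOf_eq]
      constructor
      · exact fun h => h.1
      · intro hf
        exact ⟨hf, not_isDiag_of_mem_edgesOf (hsub hf)⟩
    rwa [hEF] at hcard
  · rw [SimpleGraph.IsAcyclic] at hac
    push_neg at hac
    obtain ⟨v, cyc, hcyc⟩ := hac
    have hne : cyc.edges ≠ [] := by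
      intro h
      have := hcyc.three_le_length
      have hlen := SimpleGraph.Walk.length_edges cyc
      rw [h] at hlen
      simp at hlen
      omega
    obtain ⟨e, hemem⟩ := List.exists_mem_of_ne_nil _ hne
    have heE : e ∈ (SimpleGraph.fromEdgeSet (E0 : Set (Sym2 V))).edgeSet :=
      cyc.edges_subset_edgeSet hemem
    have heE0 : e ∈ E0 := by
      rw [SimpleGraph.edgeSet_fromEdgeSet] at heE
      exact heE.1
    have hnb : ¬ (SimpleGraph.fromEdgeSet (E0 : Set (Sym2 V))).IsBridge e := by
      rw [SimpleGraph.isBridge_iff_mem_and_forall_cycle_notMem]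
      push_neg
      exact ⟨v, cyc, hcyc, hemem⟩
      exact heE
    have hconn' : (SimpleGraph.fromEdgeSet ((E0.erase e : Finset (Sym2 V)) : Set (Sym2 V))).Connected := by
      rw [fromEdgeSet_erase]
      exact connected_delete hconn hnb heE
    have hss : E0.erase e ⊂ E0 := Finset.erase_ssubset heE0
    obtain ⟨F', hF'sub, hF'tree⟩ := ih (E0.erase e) hss
      (fun f hf => hsub (Finset.mem_of_mem_erase hf)) hconn'
    exact ⟨F', fun f hf => Finset.mem_of_mem_erase (hF'sub hf), hF'tree⟩

end Aux4
section Aux5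
set_option linter.unusedSectionVars false
set_option maxHeartbeats 1000000
open SimpleGraph

variable {V : Type*} [Fintype V] [DecidableEq V]

lemma degOn_eq_sum {G : SimpleGraph V} {J : Finset (Sym2 V)} (hJ : J ⊆ edgesOf G) (v : V) :
    (∑ e ∈ edgesOf G, if v ∈ e then (if e ∈ J then 1 else 0) else 0) = degOn J v := by
  unfold degOn
  rw [Finset.card_filter]
  rw [← Finset.sum_subset hJ (by intro e _ he; simp [he])]
  apply Finset.sum_congr rfl
  intro e he
  simp [he]

lemma setCost_eq_sum {G : SimpleGraph V} {c : Sym2 V → ℝ} {J : Finset (Sym2 V)}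
    (hJ : J ⊆ edgesOf G) :
    setCost c J = ∑ e ∈ edgesOf G, if e ∈ J then c e else 0 := by
  unfold setCost
  rw [← Finset.sum_subset hJ (by intro e _ he; simp [he])]
  apply Finset.sum_congr rfl
  intro e he
  simp [he]

lemma key_ineq (G : SimpleGraph V)
    (T : Finset V) (hT : Even T.card)
    (c : Sym2 V → ℝ) (hc : ∀ e, 0 ≤ c e)
    (F : Finset (Sym2 V)) (hF : IsSpanningTree G F)
    (hFmin : ∀ F' : Finset (Sym2 V), IsSpanningTree G F' → setCost c F ≤ setCost c F')
    (J : Finset (Sym2 V)) (hJ : IsTJoin G (symDiff (oddVerts F) T) J)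
    (hJmin : ∀ J' : Finset (Sym2 V), IsTJoin G (symDiff (oddVerts F) T) J' →
      setCost c J ≤ setCost c J')
    (m : Sym2 V → ℕ) (hm : IsTTour G T m) :
    3 * (setCost c F + setCost c J) ≤ 5 * tourCost G c m := by
  obtain ⟨hmE, hm2, hmconn, hmT⟩ := hm
  set Em := (edgesOf G).filter (fun e => 0 < m e) with hEm
  have hEmsub : Em ⊆ edgesOf G := Finset.filter_subset _ _
  have hset : ((Em : Finset (Sym2 V)) : Set (Sym2 V)) = {e | 0 < m e} := by
    ext e
    simp only [hEm, Finset.coe_filter, Set.mem_setOf_eq, mem_edgesOf]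
    constructor
    · rintro ⟨-, h⟩; exact h
    · intro h; exact ⟨hmE e h, h⟩
  have hEmconn : (SimpleGraph.fromEdgeSet ((Em : Finset (Sym2 V)) : Set (Sym2 V))).Connected := by
    rw [hset]; exact hmconn
  have hFsub : F ⊆ edgesOf G := hF.1
  have hFconn := hF.2.1
  set S := symDiff (oddVerts F) T with hS
  have hSeven : Even S.card := by
    have h1 := card_symDiff (oddVerts F) T
    have h2 := even_card_oddVerts F (fun e he => not_isDiag_of_mem_edgesOf (hFsub he))
    rw [← hS] at h1
    rw [Nat.even_iff] at h2 hT ⊢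
    omega
  obtain ⟨J3, hJ3sub, hJ3odd⟩ := exists_join hFconn S hSeven
  obtain ⟨E1, hE1sub, hE1odd⟩ := exists_join hEmconn S hSeven
  set K := F \ J3 with hK
  have hKsub : K ⊆ F := Finset.sdiff_subset
  have hKodd : oddVerts K = T := by
    have hKsd : K = symDiff F J3 := by
      ext e
      simp only [hK, Finset.mem_sdiff, mem_symDiff]
      have := @hJ3sub e
      tauto
    rw [hKsd, oddVerts_symDiff, hJ3odd]
    ext v
    simp only [mem_symDiff, hS]
    by_cases h1 : v ∈ oddVerts F <;> by_cases h2 : v ∈ T <;> simp_all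
  set J2 := (edgesOf G).filter
      (fun e => Odd (m e + (if e ∈ K then 1 else 0) + (if e ∈ E1 then 1 else 0))) with hJ2
  have hJ2sub : J2 ⊆ edgesOf G := Finset.filter_subset _ _
  have hKE : K ⊆ edgesOf G := fun e he => hFsub (hKsub he)
  have hE1E : E1 ⊆ edgesOf G := fun e he => hEmsub (hE1sub he)
  -- parity of J2
  have hJ2odd : oddVerts J2 = S := by
    ext v
    have hsplit : ∀ e : Sym2 V,
        (if v ∈ e then (m e + (if e ∈ K then 1 else 0) + (if e ∈ E1 then 1 else 0)) else 0)
        = (if v ∈ e then m e else 0) + (if v ∈ e then (if e ∈ K then 1 else 0) else 0)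
          + (if v ∈ e then (if e ∈ E1 then 1 else 0) else 0) := by
      intro e; split <;> simp
    have hsum : (∑ e ∈ edgesOf G,
        if v ∈ e then (m e + (if e ∈ K then 1 else 0) + (if e ∈ E1 then 1 else 0)) else 0)
        = (∑ e ∈ edgesOf G, if v ∈ e then m e else 0) + degOn K v + degOn E1 v := by
      simp_rw [hsplit]
      rw [Finset.sum_add_distrib, Finset.sum_add_distrib, degOn_eq_sum hKE, degOn_eq_sum hE1E]
    have hd : degOn J2 v % 2 = (∑ e ∈ edgesOf G,
        if v ∈ e then (m e + (if e ∈ K then 1 else 0) + (if e ∈ E1 then 1 else 0)) else 0) % 2 := by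
      unfold degOn
      rw [hJ2, Finset.filter_filter, Finset.card_filter, Finset.sum_nat_mod,
        Finset.sum_nat_mod (f := fun e => if v ∈ e then
          (m e + (if e ∈ K then 1 else 0) + (if e ∈ E1 then 1 else 0)) else 0)]
      congr 1
      apply Finset.sum_congr rfl
      intro e _
      by_cases hv : v ∈ e
      · by_cases ho : (m e + (if e ∈ K then 1 else 0) + (if e ∈ E1 then 1 else 0)) % 2 = 1 <;>
          simp [hv, Nat.odd_iff, ho] <;> omega
      · simp [hv]
    rw [hsum] at hd
    have hT1 : Odd (∑ e ∈ edgesOf G, if v ∈ e then m e else 0) ↔ v ∈ T := hmT v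
    have hT2 : Odd (degOn K v) ↔ v ∈ T := by rw [← mem_oddVerts, hKodd]
    have hS1 : Odd (degOn E1 v) ↔ v ∈ S := by rw [← mem_oddVerts, hE1odd]
    rw [mem_oddVerts, Nat.odd_iff]
    rw [Nat.odd_iff] at hT1 hT2 hS1
    rw [hd]
    by_cases hvT : v ∈ T <;> by_cases hvS : v ∈ S <;>
      simp only [hvT, hvS, iff_true, iff_false] at hT1 hT2 hS1 ⊢ <;> omega
  -- cost of J2
  have hcost : setCost c J2 + setCost c E1 ≤ tourCost G c m + setCost c K := by
    rw [setCost_eq_sum hJ2sub, setCost_eq_sum hE1E, setCost_eq_sum hKE]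
    unfold tourCost
    rw [← Finset.sum_add_distrib, ← Finset.sum_add_distrib]
    apply Finset.sum_le_sum
    intro e he
    have hnat : (if e ∈ J2 then 1 else 0) + (if e ∈ E1 then 1 else 0)
        ≤ m e + (if e ∈ K then 1 else 0) := by
      have hmemJ2 : e ∈ J2 ↔ (m e + (if e ∈ K then 1 else 0) + (if e ∈ E1 then 1 else 0)) % 2 = 1 := by
        rw [hJ2, Finset.mem_filter, Nat.odd_iff]
        simp [he]
      have hE1pos : e ∈ E1 → 0 < m e := by
        intro h
        have := hE1sub h
        rw [hEm, Finset.mem_filter] at this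
        exact this.2
      by_cases h1 : e ∈ J2 <;> by_cases h2 : e ∈ E1 <;> by_cases h3 : e ∈ K <;>
        simp_all <;> omega
    have hL : (if e ∈ J2 then c e else 0) + (if e ∈ E1 then c e else 0)
        = (((if e ∈ J2 then 1 else 0) + (if e ∈ E1 then 1 else 0) : ℕ) : ℝ) * c e := by
      split_ifs <;> push_cast <;> ring
    have hR : (m e : ℝ) * c e + (if e ∈ K then c e else 0)
        = ((m e + (if e ∈ K then 1 else 0) : ℕ) : ℝ) * c e := by
      split_ifs <;> push_cast <;> ring
    rw [hL, hR]
    exact mul_le_mul_of_nonneg_right (by exact_mod_cast hnat) (hc e)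
  -- tree bound
  have hFle : setCost c F ≤ tourCost G c m := by
    obtain ⟨F'', hF''sub, hF''tree⟩ := exists_spanning_tree G Em hEmsub hEmconn
    have h1 : setCost c F ≤ setCost c F'' := hFmin F'' hF''tree
    have h2 : setCost c F'' ≤ ∑ e ∈ Em, c e := by
      apply Finset.sum_le_sum_of_subset_of_nonneg hF''sub
      intro e _ _; exact hc e
    have h3 : (∑ e ∈ Em, c e) ≤ ∑ e ∈ Em, (m e : ℝ) * c e := by
      apply Finset.sum_le_sum
      intro e he
      rw [hEm, Finset.mem_filter] at he
      have : (1 : ℝ) ≤ (m e : ℝ) := by exact_mod_cast he.2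
      nlinarith [hc e]
    have h4 : (∑ e ∈ Em, (m e : ℝ) * c e) ≤ tourCost G c m := by
      unfold tourCost
      apply Finset.sum_le_sum_of_subset_of_nonneg hEmsub
      intro e _ _
      have := hc e
      positivity
    calc setCost c F ≤ setCost c F'' := h1
      _ ≤ _ := h2
      _ ≤ _ := h3
      _ ≤ _ := h4
  -- join minimality
  have hJm1 : setCost c J ≤ setCost c E1 := hJmin E1 ⟨hE1E, hE1odd⟩
  have hJm2 : setCost c J ≤ setCost c J2 := hJmin J2 ⟨hJ2sub, hJ2odd⟩
  have hJm3 : setCost c J ≤ setCost c J3 := hJmin J3 ⟨fun e he => hFsub (hJ3sub he), hJ3odd⟩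
  have hsplitF : setCost c K + setCost c J3 = setCost c F := by
    unfold setCost
    rw [hK]
    exact Finset.sum_sdiff hJ3sub
  linarith

end Aux5
set_option linter.unusedSectionVars false
set_option maxHeartbeats 1000000

/-- Christofides-type algorithm: for a minimum spanning tree `F` and a
minimum `(T_F △ T)`-join `J`, the multiset `F + J` is a `T`-tour of length at most
`(5/3) opt(G,T,c)`. -/
theorem stmt5 {V : Type*} [Fintype V] [DecidableEq V]
    (G : SimpleGraph V) (hG : G.Connected)
    (T : Finset V) (hT : Even T.card)
    (c : Sym2 V → ℝ) (hc : ∀ e, 0 ≤ c e)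
    (F : Finset (Sym2 V)) (hF : IsSpanningTree G F)
    (hFmin : ∀ F' : Finset (Sym2 V), IsSpanningTree G F' → setCost c F ≤ setCost c F')
    (J : Finset (Sym2 V)) (hJ : IsTJoin G (symDiff (oddVerts F) T) J)
    (hJmin : ∀ J' : Finset (Sym2 V), IsTJoin G (symDiff (oddVerts F) T) J' →
      setCost c J ≤ setCost c J') :
    IsTTour G T (fun e => (if e ∈ F then 1 else 0) + (if e ∈ J then 1 else 0)) ∧
    setCost c F + setCost c J ≤ (5 / 3) * optLen G T c := by
  have hJsub : J ⊆ edgesOf G := hJ.1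
  set m : Sym2 V → ℕ := fun e => (if e ∈ F then 1 else 0) + (if e ∈ J then 1 else 0) with hmdef
  have htour : IsTTour G T m := by
    refine ⟨?_, ?_, ?_, ?_⟩
    · intro e he
      by_cases h1 : e ∈ F
      · exact mem_edgesOf.1 (hF.1 h1)
      · by_cases h2 : e ∈ J
        · exact mem_edgesOf.1 (hJsub h2)
        · simp [hmdef, h1, h2] at he
    · intro e
      simp only [hmdef]
      split_ifs <;> omega
    · have hle : SimpleGraph.fromEdgeSet (F : Set (Sym2 V))
          ≤ SimpleGraph.fromEdgeSet {e | 0 < m e} := by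
        apply SimpleGraph.fromEdgeSet_mono
        intro e he
        have heF : e ∈ F := he
        simp only [Set.mem_setOf_eq, hmdef, heF]
        simp
      exact (hF.2.1).mono hle
    · intro v
      have hsplit : ∀ e : Sym2 V, (if v ∈ e then m e else 0)
          = (if v ∈ e then (if e ∈ F then 1 else 0) else 0)
            + (if v ∈ e then (if e ∈ J then 1 else 0) else 0) := by
        intro e
        simp only [hmdef]
        split <;> simp
      have hsum : (∑ e ∈ edgesOf G, if v ∈ e then m e else 0) = degOn F v + degOn J v := by
        simp_rw [hsplit]
        rw [Finset.sum_add_distrib, degOn_eq_sum hF.1, degOn_eq_sum hJsub]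
      rw [hsum]
      have h1 : Odd (degOn F v) ↔ v ∈ oddVerts F := mem_oddVerts.symm
      have h2 : Odd (degOn J v) ↔ (v ∈ oddVerts F ∧ v ∉ T) ∨ (v ∈ T ∧ v ∉ oddVerts F) :=
        mem_oddVerts.symm.trans (by rw [hJ.2, mem_symDiff])
      rw [Nat.odd_iff] at h1 h2 ⊢
      by_cases hvF : v ∈ oddVerts F <;> by_cases hvT : v ∈ T <;>
        simp [hvF, hvT] at h1 h2 ⊢ <;> omega
  refine ⟨htour, ?_⟩
  have hne : ({L : ℝ | ∃ m', IsTTour G T m' ∧ L = tourCost G c m'}).Nonempty :=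
    ⟨tourCost G c m, m, htour, rfl⟩
  have hlb : ∀ L ∈ {L : ℝ | ∃ m', IsTTour G T m' ∧ L = tourCost G c m'},
      (3 / 5) * (setCost c F + setCost c J) ≤ L := by
    rintro L ⟨m', hm', rfl⟩
    have := key_ineq G T hT c hc F hF hFmin J hJ hJmin m' hm'
    linarith
  have hinf := le_csInf hne hlb
  unfold optLen
  linarith
end

section
/- Let β ∈ (1/3, 1/2), let F ∈ ℱ_{>0}, and let C be a (T_F △ T)-cut of G such that β·x*(C) + (1 − 2β)·|C ∩ F| < 1. Then x*(C) < 2, |C ∩ F| ≥ 2, and 1 − (β·x*(C) + (1 − 2β)·|C ∩ F|) ≤ 4β − 1 − β·x*(C). -/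
open scoped Classical
open Finset

section Aux12
open scoped Classical
open Finset

variable {V : Type*} [Fintype V] [DecidableEq V]

private lemma natCast_zmod2' (n : ℕ) : (n : ZMod 2) = if Odd n then 1 else 0 := by
  rcases Nat.even_or_odd n with ⟨k, hk⟩ | ⟨k, hk⟩ <;> subst hk
  · have h : ¬ Odd (k + k) := by simp [Nat.odd_iff, Nat.add_mod]; omega
    have : ((k + k : ℕ) : ZMod 2) = 2 * (k : ZMod 2) := by push_cast; ring
    rw [this]
    simp [h, show (2 : ZMod 2) = 0 from rfl]
  · have h : Odd (2 * k + 1) := ⟨k, rfl⟩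
    have : ((2 * k + 1 : ℕ) : ZMod 2) = 2 * (k : ZMod 2) + 1 := by push_cast; ring
    rw [this]
    simp [h, show (2 : ZMod 2) = 0 from rfl]

private lemma odd_iff_of_cast_eq' {m n : ℕ} (h : (m : ZMod 2) = n) : Odd m ↔ Odd n := by
  rw [natCast_zmod2', natCast_zmod2'] at h
  by_cases hm : Odd m <;> by_cases hn : Odd n <;>
    simp [hm, hn] at h ⊢ <;>
    first
      | exact one_ne_zero h
      | exact one_ne_zero h.symm
      | skip

private lemma card_filter_cast' {α : Type*} (s : Finset α) (p : α → Prop) [DecidablePred p] :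
    (((s.filter p).card : ℕ) : ZMod 2) = ∑ a ∈ s, if p a then (1 : ZMod 2) else 0 := by
  rw [Finset.card_filter, Nat.cast_sum]
  simp only [Nat.cast_ite, Nat.cast_one, Nat.cast_zero]

/-- per-edge contribution to the parity count -/
private lemma edge_filter_card_zmod2 (W : Finset V) (e : Sym2 V) (he : ¬ e.IsDiag) :
    ((W.filter (fun v => v ∈ e)).card : ZMod 2) =
      if (∃ u v, e = s(u, v) ∧ u ∈ W ∧ v ∉ W) then 1 else 0 := by
  induction e using Sym2.ind with
  | _ a b =>
    have hab : a ≠ b := by simpa [Sym2.mk_isDiag_iff] using he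
    have hfil : W.filter (fun v => v ∈ s(a, b)) = W.filter (· = a) ∪ W.filter (· = b) := by
      rw [← Finset.filter_or]
      apply Finset.filter_congr
      intro v _
      simp [Sym2.mem_iff]
    by_cases ha : a ∈ W <;> by_cases hb : b ∈ W
    · have hcross : ¬ (∃ u v, s(a, b) = s(u, v) ∧ u ∈ W ∧ v ∉ W) := by
        rintro ⟨u, v, huv, hu, hv⟩
        rw [Sym2.eq_iff] at huv
        rcases huv with ⟨rfl, rfl⟩ | ⟨rfl, rfl⟩
        · exact hv hb
        · exact hv ha
      rw [hfil, if_neg hcross, Finset.filter_eq', Finset.filter_eq', if_pos ha, if_pos hb,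
        Finset.card_union_of_disjoint (by simpa using hab)]
      simp only [Finset.card_singleton]
      decide
    · have hcross : (∃ u v, s(a, b) = s(u, v) ∧ u ∈ W ∧ v ∉ W) := ⟨a, b, rfl, ha, hb⟩
      rw [hfil, if_pos hcross, Finset.filter_eq', Finset.filter_eq', if_pos ha, if_neg hb]
      simp
    · have hcross : (∃ u v, s(a, b) = s(u, v) ∧ u ∈ W ∧ v ∉ W) :=
        ⟨b, a, Sym2.eq_swap, hb, ha⟩
      rw [hfil, if_pos hcross, Finset.filter_eq', Finset.filter_eq', if_neg ha, if_pos hb]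
      simp
    · have hcross : ¬ (∃ u v, s(a, b) = s(u, v) ∧ u ∈ W ∧ v ∉ W) := by
        rintro ⟨u, v, huv, hu, hv⟩
        rw [Sym2.eq_iff] at huv
        rcases huv with ⟨rfl, rfl⟩ | ⟨rfl, rfl⟩
        · exact ha hu
        · exact hb hu
      rw [hfil, if_neg hcross, Finset.filter_eq', Finset.filter_eq', if_neg ha, if_neg hb]
      simp

/-- parity of the number of edges of `J` crossing `W` equals parity of odd-degree
vertices of `J` inside `W` -/
private lemma parity_cross (J : Finset (Sym2 V)) (hJ : ∀ e ∈ J, ¬ e.IsDiag) (W : Finset V) :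
    (((J.filter (fun e => ∃ u v, e = s(u, v) ∧ u ∈ W ∧ v ∉ W)).card : ZMod 2)) =
      ((W ∩ oddVerts J).card : ZMod 2) := by
  have h1 : W ∩ oddVerts J = W.filter (fun v => Odd (degOn J v)) := by
    ext v; simp [oddVerts, Finset.mem_inter, Finset.mem_filter]
  rw [card_filter_cast', h1, card_filter_cast']
  calc ∑ e ∈ J, (if ∃ u v, e = s(u, v) ∧ u ∈ W ∧ v ∉ W then (1 : ZMod 2) else 0)
      = ∑ e ∈ J, ((W.filter (fun v => v ∈ e)).card : ZMod 2) := by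
        refine Finset.sum_congr rfl fun e he => ?_
        exact (edge_filter_card_zmod2 W e (hJ e he)).symm
    _ = ∑ e ∈ J, ∑ v ∈ W, (if v ∈ e then (1 : ZMod 2) else 0) := by
        refine Finset.sum_congr rfl fun e _ => ?_
        exact card_filter_cast' W (fun v => v ∈ e)
    _ = ∑ v ∈ W, ∑ e ∈ J, (if v ∈ e then (1 : ZMod 2) else 0) := Finset.sum_comm
    _ = ∑ v ∈ W, ((degOn J v : ℕ) : ZMod 2) := by
        refine Finset.sum_congr rfl fun v _ => ?_
        exact (card_filter_cast' J (fun e => v ∈ e)).symm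
    _ = ∑ v ∈ W, (if Odd (degOn J v) then (1 : ZMod 2) else 0) := by
        refine Finset.sum_congr rfl fun v _ => ?_
        exact natCast_zmod2' _

private lemma walk_cross {G' : SimpleGraph V} {W : Finset V} :
    ∀ {u v : V}, G'.Walk u v → u ∈ W → v ∉ W →
      ∃ a b, G'.Adj a b ∧ a ∈ W ∧ b ∉ W := by
  intro u v p
  induction p with
  | nil => intro hu hv; exact absurd hu hv
  | @cons u w v h q ih =>
    intro hu hv
    by_cases hw : w ∈ W
    · exact ih hw hv
    · exact ⟨u, w, h, hu, hw⟩

private lemma symDiff_inter (W A B : Finset V) :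
    W ∩ symDiff A B = symDiff (W ∩ A) (W ∩ B) := by
  ext v
  simp only [symDiff, Finset.mem_inter, Finset.mem_union, Finset.mem_sdiff]
  tauto

private lemma symDiff_card_parity (X Y : Finset V) :
    Odd ((symDiff X Y).card) ↔ Odd (X.card + Y.card) := by
  have hdisj : Disjoint (X \ Y) (Y \ X) := by
    apply Finset.disjoint_left.mpr
    intro a ha hb
    simp only [Finset.mem_sdiff] at ha hb
    exact hb.2 ha.1
  have hc : (symDiff X Y).card = (X \ Y).card + (Y \ X).card := by
    rw [symDiff, Finset.card_union_of_disjoint hdisj]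
  have h1 : (X ∩ Y).card + (X \ Y).card = X.card := Finset.card_inter_add_card_sdiff X Y
  have h2 : (Y ∩ X).card + (Y \ X).card = Y.card := Finset.card_inter_add_card_sdiff Y X
  have h3 : (X ∩ Y).card = (Y ∩ X).card := by rw [Finset.inter_comm]
  rw [Nat.odd_iff, Nat.odd_iff]
  omega

end Aux12

/-- if a `(T_F △ T)`-cut `C` has positive deficit for `β`, then
`x*(C) < 2`, `|C ∩ F| ≥ 2`, and the deficit is at most `4β - 1 - β x*(C)`. -/
theorem stmt12 {V : Type*} [Fintype V] [DecidableEq V]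
    (G : SimpleGraph V) (hG : G.Connected)
    (T : Finset V) (hT : Even T.card)
    (c : Sym2 V → ℝ) (hc : ∀ e, 0 ≤ c e)
    (xstar : Sym2 V → ℝ) (hxP : memP G T xstar)
    (hxmin : ∀ y : Sym2 V → ℝ, memP G T y → dotE G c xstar ≤ dotE G c y)
    (𝓕 : Finset (Finset (Sym2 V))) (lam : Finset (Sym2 V) → ℝ)
    (h𝓕 : ∀ F ∈ 𝓕, IsSpanningTree G F) (hlam : ∀ F ∈ 𝓕, 0 < lam F)
    (hsum : ∑ F ∈ 𝓕, lam F = 1)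
    (hdom : ∀ e ∈ edgesOf G, (∑ F ∈ 𝓕.filter (fun F => e ∈ F), lam F) ≤ xstar e)
    (β : ℝ) (hβ1 : 1 / 3 < β) (hβ2 : β < 1 / 2)
    (F : Finset (Sym2 V)) (hF : F ∈ 𝓕)
    (W : Finset V) (hW : W.Nonempty) (hW' : W ≠ Finset.univ)
    (hWcut : Odd ((W ∩ symDiff (oddVerts F) T).card))
    (hdef : β * xval xstar (cutEdges G W) +
      (1 - 2 * β) * ((cutEdges G W ∩ F).card : ℝ) < 1) :
    xval xstar (cutEdges G W) < 2 ∧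
    2 ≤ (cutEdges G W ∩ F).card ∧
    1 - (β * xval xstar (cutEdges G W) + (1 - 2 * β) * ((cutEdges G W ∩ F).card : ℝ)) ≤
      4 * β - 1 - β * xval xstar (cutEdges G W) := by
  classical
  obtain ⟨hFsub, hFconn, -⟩ := h𝓕 F hF
  set k := (cutEdges G W ∩ F).card with hk
  have hdiagF : ∀ e ∈ F, ¬ e.IsDiag := by
    intro e he
    have heG : e ∈ G.edgeSet := by
      have := hFsub he
      simpa [edgesOf] using this
    exact G.not_isDiag_of_mem_edgeSet heG
  have hCF : cutEdges G W ∩ F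
      = F.filter (fun e => ∃ u v, e = s(u, v) ∧ u ∈ W ∧ v ∉ W) := by
    ext e
    simp only [cutEdges, Finset.mem_inter, Finset.mem_filter]
    constructor
    · rintro ⟨⟨-, h⟩, hFe⟩; exact ⟨hFe, h⟩
    · rintro ⟨hFe, h⟩; exact ⟨⟨hFsub hFe, h⟩, hFe⟩
  -- the tree crosses the cut: k ≥ 1
  obtain ⟨u, hu⟩ := hW
  obtain ⟨v, hv⟩ : ∃ v, v ∉ W := by
    by_contra h
    push_neg at h
    exact hW' (Finset.eq_univ_iff_forall.mpr h)
  obtain ⟨a, b, hadj, haW, hbW⟩ := walk_cross ((hFconn.preconnected u v).some) hu hv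
  have habF : s(a, b) ∈ F := by
    rw [SimpleGraph.fromEdgeSet_adj] at hadj
    simpa using hadj.1
  have hmem : s(a, b) ∈ cutEdges G W ∩ F := by
    rw [hCF, Finset.mem_filter]
    exact ⟨habF, a, b, rfl, haW, hbW⟩
  have hk1 : 1 ≤ k := Finset.card_pos.mpr ⟨_, hmem⟩
  -- parity facts
  have hparF : Odd k ↔ Odd ((W ∩ oddVerts F).card) := by
    rw [hk, hCF]
    exact odd_iff_of_cast_eq' (parity_cross F hdiagF W)
  have hsym : Odd ((W ∩ oddVerts F).card + (W ∩ T).card) := by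
    have h := hWcut
    rw [symDiff_inter] at h
    exact (symDiff_card_parity _ _).mp h
  have hβ0 : (0 : ℝ) < β := by linarith
  -- k ≥ 2
  have hk2 : 2 ≤ k := by
    by_contra hlt
    push_neg at hlt
    have hk1' : k = 1 := by omega
    have hodd : Odd ((W ∩ oddVerts F).card) := hparF.mp (by rw [hk1']; exact odd_one)
    have heven : Even ((W ∩ T).card) := by
      rw [Nat.odd_iff] at hsym hodd
      rw [Nat.even_iff]
      omega
    have hx2 : 2 ≤ xval xstar (cutEdges G W) := hxP.1 W ⟨u, hu⟩ hW' heven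
    rw [hk1'] at hdef
    push_cast at hdef
    nlinarith
  have hkR : (2 : ℝ) ≤ (k : ℝ) := by exact_mod_cast hk2
  have h2β : (0 : ℝ) ≤ 1 - 2 * β := by linarith
  have hbx : β * xval xstar (cutEdges G W) < 4 * β - 1 := by nlinarith
  refine ⟨?_, hk2, ?_⟩
  · nlinarith
  · nlinarith
end
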